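/- Classification of odd Moore algebras (Theorem 3.1, concretized): Let R be a commutative ring in which 2 is invertible. Call two even power series u, u' ∈ R[[t]] with zero constant coefficient H-equivalent if u' = u∘F for some odd power series F ∈ R[[t]] whose coefficient of t is a unit. Then the assignment u ↦ (0,u) induces a bijection between the set of H-equivalence classes of even power series with zero constant coefficient and the set of ∼-equivalence classes of pairs (v,w) of even power series with zero constant coefficient. (This realizes the paper's Theorem: unital weak equivalence classes of odd Moore algebras of degree d over R are in one-to-one correspondence with orbits of the group H acting by substitution on power series of degree −2 with vanishing constant term.) -/

import Mathlib

open PowerSeries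

variable {R : Type*} [CommRing R]

/-- Substitution of the power series `G` (with zero constant coefficient) into `F`. -/
noncomputable def PowerSeries.comp (F G : R⟦X⟧) : R⟦X⟧ :=
  PowerSeries.mk fun n => ∑ k ∈ Finset.range (n + 1), coeff k F * coeff n (G ^ k)

/-- A power series is even if all its odd-degree coefficients vanish. -/
def PowerSeries.IsEven (F : R⟦X⟧) : Prop := ∀ n : ℕ, Odd n → coeff n F = 0

/-- A power series is odd if all its even-degree coefficients vanish. -/
def PowerSeries.IsOdd (F : R⟦X⟧) : Prop := ∀ n : ℕ, Even n → coeff n F = 0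

/-- Membership in the group `H`: zero constant coefficient and unit coefficient of `t`. -/
def PowerSeries.InH (F : R⟦X⟧) : Prop :=
  constantCoeff F = 0 ∧ IsUnit (coeff 1 F)

/-- For `v = ∑_{i≥1} v_i t^{2i}`, this is `v⟨F⟩ := ∑_{i≥1} v_i F^{2i-1}`. -/
noncomputable def PowerSeries.substOddPow (v F : R⟦X⟧) : R⟦X⟧ :=
  PowerSeries.mk fun n =>
    ∑ i ∈ Finset.range (n + 1), coeff (2 * (i + 1)) v * coeff n (F ^ (2 * (i + 1) - 1))

/-- The action `T_{(G,F)}` of a unital `A_∞`-isomorphism on the pair `(v,w)` of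
characteristic power series of an odd Moore algebra. -/
noncomputable def MooreAct (G F : R⟦X⟧) (p : R⟦X⟧ × R⟦X⟧) : R⟦X⟧ × R⟦X⟧ :=
  (2 * PowerSeries.X * G + PowerSeries.X * PowerSeries.substOddPow p.1 F,
    -(G * PowerSeries.substOddPow p.1 F) + PowerSeries.comp p.2 F - G ^ 2)

section Aux

open Finset

lemma om_coeff_pow_eq_zero {F : R⟦X⟧} (hF : constantCoeff F = 0) {n k : ℕ} (h : n < k) :
    coeff n (F ^ k) = 0 :=
  (PowerSeries.X_pow_dvd_iff.mp (pow_dvd_pow_of_dvd (PowerSeries.X_dvd_iff.mpr hF) k)) n h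

lemma om_coeff_comp (a F : R⟦X⟧) (n : ℕ) :
    coeff n (a.comp F) = ∑ k ∈ range (n + 1), coeff k a * coeff n (F ^ k) := by
  simp [PowerSeries.comp, coeff_mk]

lemma om_coeff_eval₂ {F : R⟦X⟧} (hF : constantCoeff F = 0) (P : Polynomial R) (n : ℕ) :
    coeff n (Polynomial.eval₂ (C (R := R)) F P)
      = ∑ k ∈ range (n + 1), P.coeff k * coeff n (F ^ k) := by
  rw [Polynomial.eval₂_eq_sum, Polynomial.sum_def, map_sum]
  simp only [coeff_C_mul]
  have e1 : (∑ k ∈ P.support, P.coeff k * coeff n (F ^ k))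
      = ∑ k ∈ P.support ∪ range (n + 1), P.coeff k * coeff n (F ^ k) :=
    Finset.sum_subset Finset.subset_union_left fun x _ hxs => by
      rw [Polynomial.notMem_support_iff.mp hxs, zero_mul]
  have e2 : (∑ k ∈ range (n + 1), P.coeff k * coeff n (F ^ k))
      = ∑ k ∈ P.support ∪ range (n + 1), P.coeff k * coeff n (F ^ k) :=
    Finset.sum_subset Finset.subset_union_right fun x _ hxr => by
      have hx : n < x := by simp only [Finset.mem_range] at hxr; omega
      rw [om_coeff_pow_eq_zero hF hx, mul_zero]
  rw [e1, e2]

lemma om_comp_add (a b F : R⟦X⟧) : (a + b).comp F = a.comp F + b.comp F := by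
  ext n
  simp [om_coeff_comp, add_mul, Finset.sum_add_distrib]

lemma om_comp_C (r : R) (F : R⟦X⟧) : (C r).comp F = C r := by
  ext n
  rw [om_coeff_comp, Finset.sum_eq_single_of_mem 0 (Finset.mem_range.mpr (Nat.succ_pos n))]
  · rw [pow_zero, PowerSeries.coeff_one, PowerSeries.coeff_C, PowerSeries.coeff_C,
      if_pos rfl]
    split_ifs <;> simp
  · intro k _ hk
    rw [PowerSeries.coeff_C, if_neg hk, zero_mul]

lemma om_comp_mul {F : R⟦X⟧} (hF : constantCoeff F = 0) (a b : R⟦X⟧) :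
    (a * b).comp F = a.comp F * b.comp F := by
  ext n
  have key : ∀ (c : R⟦X⟧) (p : ℕ), p ≤ n →
      coeff p (Polynomial.eval₂ (C (R := R)) F (trunc (n + 1) c)) = coeff p (c.comp F) := by
    intro c p hp
    rw [om_coeff_eval₂ hF, om_coeff_comp]
    refine Finset.sum_congr rfl fun k hk => ?_
    rw [coeff_trunc, if_pos (by simp only [Finset.mem_range] at hk; omega)]
  have lhs : coeff n ((a * b).comp F)
      = coeff n (Polynomial.eval₂ (C (R := R)) F (trunc (n + 1) a * trunc (n + 1) b)) := by
    rw [om_coeff_comp, om_coeff_eval₂ hF]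
    refine Finset.sum_congr rfl fun k hk => ?_
    have hkn : k ≤ n := by simp only [Finset.mem_range] at hk; omega
    congr 1
    rw [PowerSeries.coeff_mul, Polynomial.coeff_mul]
    refine Finset.sum_congr rfl fun q hq => ?_
    have hq' := Finset.HasAntidiagonal.mem_antidiagonal.mp hq
    rw [coeff_trunc, coeff_trunc, if_pos (by omega), if_pos (by omega)]
  rw [lhs, Polynomial.eval₂_mul, PowerSeries.coeff_mul, PowerSeries.coeff_mul]
  refine Finset.sum_congr rfl fun q hq => ?_
  have hq' := Finset.HasAntidiagonal.mem_antidiagonal.mp hq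
  rw [key a q.1 (by omega), key b q.2 (by omega)]

lemma om_comp_X (a : R⟦X⟧) : a.comp X = a := by
  ext n
  rw [om_coeff_comp, Finset.sum_eq_single_of_mem n (Finset.self_mem_range_succ n)]
  · rw [PowerSeries.coeff_X_pow, if_pos rfl, mul_one]
  · intro k _ hk
    rw [PowerSeries.coeff_X_pow, if_neg (fun h => hk h.symm), mul_zero]

lemma om_coeff_substOddPow_X (v : R⟦X⟧) (k : ℕ) :
    coeff k (v.substOddPow X) = if Odd k then coeff (k + 1) v else 0 := by
  rw [PowerSeries.substOddPow, coeff_mk]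
  rcases Nat.even_or_odd k with he | ho
  · rw [if_neg (Nat.not_odd_iff_even.mpr he)]
    refine Finset.sum_eq_zero fun i _ => ?_
    rw [PowerSeries.coeff_X_pow, if_neg (by obtain ⟨j, hj⟩ := he; omega), mul_zero]
  · obtain ⟨m, rfl⟩ := ho
    rw [if_pos ⟨m, rfl⟩, Finset.sum_eq_single_of_mem m (Finset.mem_range.mpr (by omega))]
    · rw [PowerSeries.coeff_X_pow, if_pos (by omega), mul_one,
        show 2 * (m + 1) = 2 * m + 1 + 1 by omega]
    · intro i _ him
      rw [PowerSeries.coeff_X_pow, if_neg (by omega), mul_zero]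

lemma om_substOddPow_zero (F : R⟦X⟧) : (0 : R⟦X⟧).substOddPow F = 0 := by
  ext n
  simp [PowerSeries.substOddPow, coeff_mk]

lemma om_isOdd_X : (X : R⟦X⟧).IsOdd := fun n hn => by
  rw [← pow_one (X : R⟦X⟧), PowerSeries.coeff_X_pow,
    if_neg (by rintro rfl; exact Nat.not_even_one hn)]

lemma om_isOdd_zero : (0 : R⟦X⟧).IsOdd := fun n _ => by simp

lemma om_odd_mul_odd {a b : R⟦X⟧} (ha : a.IsOdd) (hb : b.IsOdd) : (a * b).IsEven := by
  intro n hn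
  rw [PowerSeries.coeff_mul]
  refine Finset.sum_eq_zero fun q hq => ?_
  have hq' := Finset.HasAntidiagonal.mem_antidiagonal.mp hq
  rcases Nat.even_or_odd q.1 with h | h
  · rw [ha q.1 h, zero_mul]
  · have hj : Even q.2 := by
      obtain ⟨m, hm⟩ := hn; obtain ⟨l, hl⟩ := h
      exact ⟨m - l, by omega⟩
    rw [hb q.2 hj, mul_zero]

lemma om_even_mul_odd {a b : R⟦X⟧} (ha : a.IsEven) (hb : b.IsOdd) : (a * b).IsOdd := by
  intro n hn
  rw [PowerSeries.coeff_mul]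
  refine Finset.sum_eq_zero fun q hq => ?_
  have hq' := Finset.HasAntidiagonal.mem_antidiagonal.mp hq
  rcases Nat.even_or_odd q.1 with h | h
  · have hj : Even q.2 := by
      obtain ⟨m, hm⟩ := hn; obtain ⟨l, hl⟩ := h
      exact ⟨m - l, by omega⟩
    rw [hb q.2 hj, mul_zero]
  · rw [ha q.1 h, zero_mul]

lemma om_isOdd_pow {F : R⟦X⟧} (hF : F.IsOdd) : ∀ i : ℕ, (F ^ (2 * i + 1)).IsOdd := by
  intro i
  induction i with
  | zero => simpa using hF
  | succ i ih =>
      have h : 2 * (i + 1) + 1 = ((2 * i + 1) + 1) + 1 := by omega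
      rw [h, pow_succ, pow_succ]
      exact om_even_mul_odd (om_odd_mul_odd ih hF) hF

lemma om_isOdd_substOddPow {v F : R⟦X⟧} (hF : F.IsOdd) : (v.substOddPow F).IsOdd := by
  intro n hn
  rw [PowerSeries.substOddPow, coeff_mk]
  refine Finset.sum_eq_zero fun i _ => ?_
  have h : 2 * (i + 1) - 1 = 2 * i + 1 := by omega
  rw [h, om_isOdd_pow hF i n hn, mul_zero]

lemma om_isOdd_neg {a : R⟦X⟧} (ha : a.IsOdd) : (-a).IsOdd := fun n hn => by
  rw [map_neg, ha n hn, neg_zero]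

lemma om_isOdd_C_mul {a : R⟦X⟧} (r : R) (ha : a.IsOdd) : (C r * a).IsOdd := fun n hn => by
  rw [coeff_C_mul, ha n hn, mul_zero]

lemma om_isEven_C_mul {a : R⟦X⟧} (r : R) (ha : a.IsEven) : (C r * a).IsEven := fun n hn => by
  rw [coeff_C_mul, ha n hn, mul_zero]

lemma om_isEven_add {a b : R⟦X⟧} (ha : a.IsEven) (hb : b.IsEven) : (a + b).IsEven :=
  fun n hn => by rw [map_add, ha n hn, hb n hn, add_zero]

lemma om_sum_range_two_mul (m : ℕ) (f : ℕ → R) :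
    ∑ k ∈ Finset.range (2 * m), f k = ∑ i ∈ Finset.range m, (f (2 * i) + f (2 * i + 1)) := by
  induction m with
  | zero => simp
  | succ m ih =>
      have h : 2 * (m + 1) = (2 * m + 1) + 1 := by omega
      rw [h, Finset.sum_range_succ, Finset.sum_range_succ, Finset.sum_range_succ, ih]
      ring

lemma om_substOddPow_comp (v : R⟦X⟧) {F : R⟦X⟧} (hF : constantCoeff F = 0) :
    v.substOddPow F = (v.substOddPow X).comp F := by
  ext n
  rw [om_coeff_comp]
  have hext : (∑ k ∈ Finset.range (n + 1), coeff k (v.substOddPow X) * coeff n (F ^ k))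
      = ∑ k ∈ Finset.range (2 * (n + 1)), coeff k (v.substOddPow X) * coeff n (F ^ k) :=
    Finset.sum_subset (Finset.range_subset_range.mpr (by omega)) fun x _ hx => by
      have hnx : n < x := by simp only [Finset.mem_range] at hx; omega
      rw [om_coeff_pow_eq_zero hF hnx, mul_zero]
  rw [hext, om_sum_range_two_mul]
  conv_lhs => rw [PowerSeries.substOddPow, coeff_mk]
  refine Finset.sum_congr rfl fun i _ => ?_
  rw [om_coeff_substOddPow_X, om_coeff_substOddPow_X,
    if_neg (Nat.not_odd_iff_even.mpr ⟨i, two_mul i⟩), if_pos ⟨i, rfl⟩, zero_mul, zero_add]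
  have e1 : 2 * (i + 1) = 2 * i + 1 + 1 := by omega
  have e2 : 2 * (i + 1) - 1 = 2 * i + 1 := by omega
  rw [e2, e1]

lemma om_substOddPow_X_mul {a : R⟦X⟧} (ha : a.IsOdd) : (X * a).substOddPow X = a := by
  ext k
  rw [om_coeff_substOddPow_X]
  split_ifs with h
  · exact PowerSeries.coeff_succ_X_mul k a
  · exact (ha k (Nat.not_odd_iff_even.mp h)).symm

end Aux

set_option maxHeartbeats 2000000 in
/-- **Classification of odd Moore algebras** (Theorem 3.1).  Over a commutative ring `R` with
`2` invertible, the assignment `u ↦ (0, u)` induces a bijection between `H`-equivalence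
classes of even power series with zero constant coefficient and `∼`-equivalence classes of
pairs `(v, w)` of even power series with zero constant coefficient. -/
theorem odd_moore_classification (R : Type*) [CommRing R] (h2 : IsUnit (2 : R)) :
    ∃ e : Quot (fun u u' : {u : R⟦X⟧ // u.IsEven ∧ constantCoeff u = 0} =>
          ∃ F : R⟦X⟧, F.IsOdd ∧ F.InH ∧ u'.1 = u.1.comp F) ≃
        Quot (fun p p' : {p : R⟦X⟧ × R⟦X⟧ // p.1.IsEven ∧ constantCoeff p.1 = 0 ∧
              p.2.IsEven ∧ constantCoeff p.2 = 0} =>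
          ∃ G F : R⟦X⟧, G.IsOdd ∧ F.IsOdd ∧ F.InH ∧ p'.1 = MooreAct G F p.1),
      ∀ u, e (Quot.mk _ u) =
        Quot.mk _ ⟨((0 : R⟦X⟧), u.1), fun n _ => by simp, by simp, u.2.1, u.2.2⟩ := by
  classical
  obtain ⟨c, hc⟩ : ∃ c : R, 2 * c = 1 := by
    obtain ⟨u, hu⟩ := h2
    exact ⟨↑u⁻¹, by rw [← hu]; exact u.mul_inv⟩
  set q : R := c - c * c with hq
  have h4C : (PowerSeries.C q) * 4 = 1 := by
    have h4 : q * 4 = 1 := by rw [hq]; linear_combination (1 - 2 * c) * hc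
    rw [show (4 : R⟦X⟧) = PowerSeries.C 4 from (map_ofNat _ 4).symm, ← map_mul, h4, map_one]
  -- the key computation: the backward invariant transforms by composition with F
  have hbw : ∀ (vw : R⟦X⟧ × R⟦X⟧) (G F : R⟦X⟧), G.IsOdd → F.IsOdd → constantCoeff F = 0 →
      (MooreAct G F vw).2 + PowerSeries.C q * (((MooreAct G F vw).1).substOddPow X) ^ 2
        = (vw.2 + PowerSeries.C q * (vw.1.substOddPow X) ^ 2).comp F := by
    intro vw G F hG hF hFc
    obtain ⟨v, w⟩ := vw
    have hsF : (v.substOddPow F).IsOdd := om_isOdd_substOddPow hF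
    have hodd : (2 * G + v.substOddPow F).IsOdd := by
      intro n hn
      rw [map_add, hsF n hn,
        show (2 : R⟦X⟧) = PowerSeries.C 2 from (map_ofNat _ 2).symm, coeff_C_mul, hG n hn]
      ring
    have key1 : ((2 * X * G + X * v.substOddPow F).substOddPow X) = 2 * G + v.substOddPow F := by
      have e : 2 * X * G + X * v.substOddPow F = X * (2 * G + v.substOddPow F) := by ring
      rw [e, om_substOddPow_X_mul hodd]
    simp only [MooreAct]
    rw [key1]
    conv_rhs => rw [om_comp_add, pow_two, om_comp_mul hFc, om_comp_mul hFc, om_comp_C,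
      ← om_substOddPow_comp v hFc]
    linear_combination (G ^ 2 + G * (v.substOddPow F)) * h4C
  -- the fixed-point computation: every pair is equivalent to one with vanishing first entry
  have hfix : ∀ v w : R⟦X⟧, MooreAct (-(PowerSeries.C c * v.substOddPow X)) X (v, w)
      = (0, w + PowerSeries.C q * (v.substOddPow X) ^ 2) := by
    intro v w
    have h2C : (PowerSeries.C c) * 2 = 1 := by
      rw [show (2 : R⟦X⟧) = PowerSeries.C 2 from (map_ofNat _ 2).symm, ← map_mul,
        mul_comm c 2, hc, map_one]
    have hCq : PowerSeries.C q = PowerSeries.C c - PowerSeries.C c * PowerSeries.C c := by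
      rw [hq, map_sub, map_mul]
    have c1 : 2 * X * (-(PowerSeries.C c * v.substOddPow X)) + X * v.substOddPow X
        = 0 := by
      linear_combination (-(X * v.substOddPow X)) * h2C
    have c2 : -(-(PowerSeries.C c * v.substOddPow X) * v.substOddPow X) + w.comp X
          - (-(PowerSeries.C c * v.substOddPow X)) ^ 2
          = w + PowerSeries.C q * (v.substOddPow X) ^ 2 := by
      rw [om_comp_X, hCq]
      ring
    simp only [MooreAct]
    rw [c1, c2]
  have hzero : ∀ (u F : R⟦X⟧), MooreAct 0 F ((0 : R⟦X⟧), u) = (0, u.comp F) := by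
    intro u F
    unfold MooreAct
    simp [om_substOddPow_zero]
  -- evenness and constant-coefficient conditions for the backward value
  have hbE : ∀ vw : R⟦X⟧ × R⟦X⟧, vw.2.IsEven → constantCoeff vw.2 = 0 →
      (vw.2 + PowerSeries.C q * (vw.1.substOddPow X) ^ 2).IsEven ∧
        constantCoeff (vw.2 + PowerSeries.C q * (vw.1.substOddPow X) ^ 2) = 0 := by
    intro vw hE h0
    have hsodd : (vw.1.substOddPow X).IsOdd := om_isOdd_substOddPow om_isOdd_X
    have h0s : constantCoeff (vw.1.substOddPow X) = 0 := by
      have := hsodd 0 Even.zero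
      rwa [PowerSeries.coeff_zero_eq_constantCoeff] at this
    constructor
    · refine om_isEven_add hE (om_isEven_C_mul q ?_)
      rw [pow_two]
      exact om_odd_mul_odd hsodd hsodd
    · simp [map_add, map_mul, map_pow, h0, h0s]
  refine ⟨⟨Quot.map (fun u => ⟨((0 : R⟦X⟧), u.1), fun n _ => by simp, by simp, u.2.1, u.2.2⟩) ?_,
      Quot.map (fun p => ⟨p.1.2 + PowerSeries.C q * ((p.1.1.substOddPow X)) ^ 2,
        (hbE p.1 p.2.2.2.1 p.2.2.2.2).1, (hbE p.1 p.2.2.2.1 p.2.2.2.2).2⟩) ?_,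
      ?_, ?_⟩, ?_⟩
  · rintro u u' ⟨F, hFo, hFh, huu⟩
    refine ⟨0, F, om_isOdd_zero, hFo, hFh, ?_⟩
    have h : (((0 : R⟦X⟧), u'.1) : R⟦X⟧ × R⟦X⟧) = MooreAct 0 F ((0 : R⟦X⟧), u.1) := by
      rw [hzero u.1 F, huu]
    exact h
  · rintro p p' ⟨G, F, hGo, hFo, hFh, hrel⟩
    refine ⟨F, hFo, hFh, ?_⟩
    have h := hbw p.1 G F hGo hFo hFh.1
    rw [← hrel] at h
    exact h
  · intro qu
    induction qu using Quot.ind with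
    | _ u =>
        have hval : u.1 + PowerSeries.C q * (((0 : R⟦X⟧).substOddPow X)) ^ 2 = u.1 := by
          rw [om_substOddPow_zero]
          simp
        exact congrArg (Quot.mk _) (Subtype.ext hval)
  · intro qp
    induction qp using Quot.ind with
    | _ p =>
        exact (Quot.sound ⟨-(PowerSeries.C c * (p.1.1.substOddPow X)), X,
          om_isOdd_neg (om_isOdd_C_mul c (om_isOdd_substOddPow om_isOdd_X)), om_isOdd_X,
          ⟨PowerSeries.constantCoeff_X, by rw [PowerSeries.coeff_one_X]; exact isUnit_one⟩,
          (hfix p.1.1 p.1.2).symm⟩).symm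
  · intro u
    rfl
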